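/- Let Z_1,…,Z_n be independent Bernoulli random variables with P(Z_i = 1) = x^i/(1 + x^i), for fixed 0 < x < 1. Then P(∑_{i=1}^n i·Z_i = n) = q(n) · x^n · ∏_{i=1}^n (1 + x^i)^{-1}, where q(n) is the number of partitions of n into distinct parts. -/

import Mathlib

open MeasureTheory ProbabilityTheory Finset

/-- If `Z_1, …, Z_n` are independent Bernoulli random variables with
`P(Z_i = 1) = x^i/(1+x^i)` for fixed `0 < x < 1`, then
`P(∑ i·Z_i = n) = q(n) · x^n · ∏ (1+x^i)⁻¹`, where `q(n)` is the number of partitions of `n`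
into distinct parts. -/
lemma card_subsets_eq_distincts (n : ℕ) :
    (Finset.univ.filter (fun S : Finset (Fin n) => ∑ i ∈ S, ((i : ℕ) + 1) = n)).card
      = (Nat.Partition.distincts n).card := by
  have hinj : Function.Injective (fun i : Fin n => (i : ℕ) + 1) := by
    intro a b h; simp only [add_left_inj] at h; exact Fin.val_injective h
  apply Finset.card_bij (fun S hS => Nat.Partition.mk (S.val.map (fun i : Fin n => (i : ℕ) + 1))
    (fun h => by
      simp only [Multiset.mem_map] at h
      obtain ⟨i, _, rfl⟩ := h
      omega)
    (by
      simp only [Finset.mem_filter] at hS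
      exact hS.2))
  · intro S hS
    simp only [Nat.Partition.distincts, Finset.mem_filter, Finset.mem_univ, true_and]
    exact Multiset.Nodup.map hinj S.nodup
  · intro S hS T hT h
    have := congrArg Nat.Partition.parts h
    simp only at this
    exact Finset.val_injective (Multiset.map_injective hinj this)
  · intro p hp
    simp only [Nat.Partition.distincts, Finset.mem_filter, Finset.mem_univ, true_and] at hp
    have hle : ∀ k ∈ p.parts, k ≤ n := by
      intro k hk
      calc k ≤ p.parts.sum := Multiset.le_sum_of_mem hk  -- name?
      _ = n := p.parts_sum
    set S : Finset (Fin n) := Finset.univ.filter (fun i : Fin n => ((i : ℕ) + 1) ∈ p.parts)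
      with hSdef
    have hmap : S.val.map (fun i : Fin n => (i : ℕ) + 1) = p.parts := by
      refine (Multiset.Nodup.ext (Multiset.Nodup.map hinj S.nodup) hp).2 ?_
      intro k
      simp only [Multiset.mem_map, Finset.mem_val, hSdef, Finset.mem_filter, Finset.mem_univ,
        true_and]
      constructor
      · rintro ⟨i, hi, rfl⟩; exact hi
      · intro hk
        have h1 : 0 < k := p.parts_pos hk
        have h2 : k ≤ n := hle k hk
        exact ⟨⟨k - 1, by omega⟩, by simpa [Nat.sub_add_cancel h1] using hk,
          by simp only [Fin.val_mk]; omega⟩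
    refine ⟨S, ?_, ?_⟩
    · simp only [Finset.mem_filter, Finset.mem_univ, true_and]
      have : ∑ i ∈ S, ((i : ℕ) + 1) = (S.val.map (fun i : Fin n => (i : ℕ) + 1)).sum := rfl
      rw [this, hmap, p.parts_sum]
    · exact Nat.Partition.ext hmap

theorem boltzmann_distinct_partition_prob {Ω : Type*} [MeasurableSpace Ω]
    (μ : Measure Ω) [IsProbabilityMeasure μ] (n : ℕ)
    (x : ℝ) (hx0 : 0 < x) (hx1 : x < 1)
    (Z : Fin n → Ω → ℕ) (hmeas : ∀ i, Measurable (Z i))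
    (hindep : iIndepFun Z μ)
    (hbern : ∀ (i : Fin n) (k : ℕ),
      μ {ω | Z i ω = k} = ENNReal.ofReal
        (if k = 0 then 1 / (1 + x ^ ((i : ℕ) + 1))
         else if k = 1 then x ^ ((i : ℕ) + 1) / (1 + x ^ ((i : ℕ) + 1))
         else 0)) :
    μ {ω | ∑ i : Fin n, ((i : ℕ) + 1) * Z i ω = n}
      = ENNReal.ofReal (((Nat.Partition.distincts n).card : ℝ) * x ^ n *
          ∏ i : Fin n, (1 + x ^ ((i : ℕ) + 1))⁻¹) := by
  classical
  set A : (Fin n → ℕ) → Set Ω := fun z =>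
    if ∑ i : Fin n, ((i : ℕ) + 1) * z i = n then ⋂ i, Z i ⁻¹' {z i} else ∅ with hAdef
  -- Event decomposition
  have hE : {ω | ∑ i : Fin n, ((i : ℕ) + 1) * Z i ω = n} = ⋃ z : Fin n → ℕ, A z := by
    ext ω
    simp only [Set.mem_setOf_eq, Set.mem_iUnion, hAdef]
    constructor
    · intro h
      refine ⟨fun i => Z i ω, ?_⟩
      rw [if_pos h]
      exact Set.mem_iInter.2 fun i => rfl
    · rintro ⟨z, hz⟩
      by_cases h : ∑ i : Fin n, ((i : ℕ) + 1) * z i = n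
      · rw [if_pos h] at hz
        have hzi : ∀ i, Z i ω = z i := fun i => Set.mem_iInter.1 hz i
        calc ∑ i : Fin n, ((i : ℕ) + 1) * Z i ω
            = ∑ i : Fin n, ((i : ℕ) + 1) * z i := by
              exact Finset.sum_congr rfl fun i _ => by rw [hzi i]
          _ = n := h
      · rw [if_neg h] at hz
        exact absurd hz (Set.notMem_empty ω)
  have hAm : ∀ z, MeasurableSet (A z) := by
    intro z
    simp only [hAdef]
    split_ifs
    · exact MeasurableSet.iInter fun i => (hmeas i) (measurableSet_singleton _)
    · exact MeasurableSet.empty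
  have hdisj : Pairwise (Function.onFun Disjoint A) := by
    intro z w hzw
    have hd : Disjoint (⋂ i, Z i ⁻¹' {z i}) (⋂ i, Z i ⁻¹' {w i}) := by
      rw [Set.disjoint_left]
      intro ω h1 h2
      apply hzw
      funext i
      have e1 := Set.mem_iInter.1 h1 i
      have e2 := Set.mem_iInter.1 h2 i
      simp only [Set.mem_preimage, Set.mem_singleton_iff] at e1 e2
      rw [← e1, ← e2]
    simp only [Function.onFun, hAdef]
    split_ifs <;> simp [hd]
  -- value of μ (A z)
  have hAz : ∀ z : Fin n → ℕ, μ (A z) =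
      if ∑ i : Fin n, ((i : ℕ) + 1) * z i = n then
        ∏ i : Fin n, μ {ω | Z i ω = z i} else 0 := by
    intro z
    simp only [hAdef]
    split_ifs
    · exact hindep.meas_iInter fun i => ⟨{z i}, measurableSet_singleton _, rfl⟩
    · exact measure_empty
  -- the finite support
  set e : Finset (Fin n) → (Fin n → ℕ) := fun S i => if i ∈ S then 1 else 0 with hedef
  set F : Finset (Finset (Fin n)) :=
    Finset.univ.filter (fun S : Finset (Fin n) => ∑ i ∈ S, ((i : ℕ) + 1) = n) with hFdef
  set T : Finset (Fin n → ℕ) := F.image e with hTdef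
  have heinj : Function.Injective e := by
    intro S T h
    ext i
    have := congrFun h i
    simp only [hedef] at this
    by_cases hS : i ∈ S <;> by_cases hT : i ∈ T <;> simp [hS, hT] at this ⊢
  have hsum_e : ∀ S : Finset (Fin n),
      ∑ i : Fin n, ((i : ℕ) + 1) * e S i = ∑ i ∈ S, ((i : ℕ) + 1) := by
    intro S
    have hterm : ∀ i : Fin n, ((i : ℕ) + 1) * e S i = if i ∈ S then (i : ℕ) + 1 else 0 := by
      intro i
      simp only [hedef]
      split_ifs <;> simp
    rw [Finset.sum_congr rfl fun i _ => hterm i, Finset.sum_ite_mem, Finset.univ_inter]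
  -- zero off T
  have hzero : ∀ z ∉ T, μ (A z) = 0 := by
    intro z hz
    rw [hAz]
    split_ifs with h
    · -- some z i ≥ 2, else z ∈ T
      by_cases hb : ∀ i, z i ≤ 1
      · exfalso
        apply hz
        have hze : z = e (Finset.univ.filter (fun i => z i = 1)) := by
          funext i
          simp only [hedef, Finset.mem_filter, Finset.mem_univ, true_and]
          split_ifs with h1
          · exact h1
          · have := hb i; omega
        refine Finset.mem_image.2 ⟨_, ?_, hze.symm⟩
        simp only [hFdef, Finset.mem_filter, Finset.mem_univ, true_and]
        rw [← hsum_e, ← hze, h]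
      · push_neg at hb
        obtain ⟨i, hi⟩ := hb
        refine Finset.prod_eq_zero (Finset.mem_univ i) ?_
        rw [hbern i (z i), if_neg (show ¬ z i = 0 by omega), if_neg (show ¬ z i = 1 by omega),
          ENNReal.ofReal_zero]
    · rfl
  -- value on T
  have hval : ∀ S ∈ F, μ (A (e S)) =
      ENNReal.ofReal (x ^ n * ∏ i : Fin n, (1 + x ^ ((i : ℕ) + 1))⁻¹) := by
    intro S hS
    simp only [hFdef, Finset.mem_filter, Finset.mem_univ, true_and] at hS
    rw [hAz, if_pos (by rw [hsum_e]; exact hS)]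
    have hpos : ∀ i : Fin n, (0:ℝ) < 1 + x ^ ((i : ℕ) + 1) := fun i => by positivity
    have hterm : ∀ i : Fin n, μ {ω | Z i ω = e S i} =
        ENNReal.ofReal ((if i ∈ S then x ^ ((i : ℕ) + 1) else 1)
          * (1 + x ^ ((i : ℕ) + 1))⁻¹) := by
      intro i
      rw [hbern i (e S i)]
      congr 1
      simp only [hedef]
      by_cases h : i ∈ S <;> simp [h, div_eq_mul_inv]
    rw [Finset.prod_congr rfl fun i _ => hterm i,
      ← ENNReal.ofReal_prod_of_nonneg (fun i _ => by positivity)]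
    congr 1
    rw [Finset.prod_mul_distrib]
    congr 1
    rw [Finset.prod_ite_mem, Finset.univ_inter, Finset.prod_pow_eq_pow_sum, hS]
  -- put together
  rw [hE, measure_iUnion hdisj hAm, tsum_eq_sum (s := T) hzero, hTdef,
    Finset.sum_image (fun a _ b _ h => heinj h), Finset.sum_congr rfl hval,
    Finset.sum_const]
  have hc2 : F.card = (Nat.Partition.distincts n).card := card_subsets_eq_distincts n
  rw [hc2, nsmul_eq_mul, mul_assoc,
    ENNReal.ofReal_mul (Nat.cast_nonneg _), ENNReal.ofReal_natCast]
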